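/- Let u(t) = Σ_{n∈N} u_n(t) be a finite sum of harmonic components u_n(t) = √2 U_n^c cos(nωt) + √2 U_n^s sin(nωt) (with distinct positive integers n), and let i ∈ L²[0,T]. Define the active current i_a = (⟨u,i⟩/‖u‖²)u, the conductance coefficients G_n = ⟨u_n,i⟩/‖u_n‖², the scattered current i_s = Σ_n (G_n − G_e)u_n with G_e = ⟨u,i⟩/‖u‖², and the reactive current i_r = Σ_n (⟨u̇_n,i⟩/‖u̇_n‖²)u̇_n where u̇_n is the time derivative of u_n. Then i_a, i_s, i_r are pairwise orthogonal: ⟨i_a,i_s⟩ = ⟨i_a,i_r⟩ = ⟨i_s,i_r⟩ = 0. -/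

import Mathlib

open MeasureTheory intervalIntegral

/-- mean inner product over one period. -/
noncomputable def ip (T : ℝ) (f g : ℝ → ℝ) : ℝ :=
  (1/T) * ∫ t in (0:ℝ)..T, f t * g t

lemma Icos_aux (T : ℝ) (hT : 0 < T) (k : ℤ) :
    ∫ t in (0:ℝ)..T, Real.cos (k * (2*Real.pi/T) * t) = if k = 0 then T else 0 := by
  rcases eq_or_ne k 0 with hk | hk
  · simp [hk]
  · simp only [hk, if_false]
    have hc : (k : ℝ) * (2*Real.pi/T) ≠ 0 := by
      apply mul_ne_zero (Int.cast_ne_zero.2 hk); positivity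
    have h := intervalIntegral.integral_comp_mul_left Real.cos hc (a := 0) (b := T)
    simp only [mul_zero] at h
    rw [h, integral_cos]
    have h1 : (k:ℝ) * (2*Real.pi/T) * T = (2*k) * Real.pi := by field_simp
    rw [h1, show ((2*(k:ℝ))) * Real.pi = ((2*k : ℤ) : ℝ) * Real.pi by push_cast; ring,
      Real.sin_int_mul_pi]
    simp

lemma Isin_aux (T : ℝ) (hT : 0 < T) (k : ℤ) :
    ∫ t in (0:ℝ)..T, Real.sin (k * (2*Real.pi/T) * t) = 0 := by
  rcases eq_or_ne k 0 with hk | hk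
  · simp [hk]
  · have hc : (k : ℝ) * (2*Real.pi/T) ≠ 0 := by
      apply mul_ne_zero (Int.cast_ne_zero.2 hk); positivity
    have h := intervalIntegral.integral_comp_mul_left Real.sin hc (a := 0) (b := T)
    simp only [mul_zero] at h
    rw [h, integral_sin]
    have h1 : (k:ℝ) * (2*Real.pi/T) * T = (k:ℝ) * (2*Real.pi) := by field_simp
    rw [h1, Real.cos_int_mul_two_pi]
    simp

lemma ip_trig (T : ℝ) (hT : 0 < T) (ω : ℝ) (hω : ω = 2 * Real.pi / T)
    (a b : ℕ) (ha : 0 < a) (hb : 0 < b) (A B C D : ℝ) :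
    ip T (fun t => A * Real.cos (a*ω*t) + B * Real.sin (a*ω*t))
         (fun t => C * Real.cos (b*ω*t) + D * Real.sin (b*ω*t))
      = if a = b then (A*C + B*D)/2 else 0 := by
  subst hω
  set ω := 2 * Real.pi / T with hω
  have e1 : ∀ t : ℝ, Real.cos (a*ω*t) * Real.cos (b*ω*t)
      = (Real.cos ((((a:ℤ) - b : ℤ) : ℝ)*ω*t) + Real.cos ((((a:ℤ) + b : ℤ) : ℝ)*ω*t))/2 := by
    intro t
    push_cast
    rw [show ((a:ℝ) - b)*ω*t = a*ω*t - b*ω*t by ring, show ((a:ℝ) + b)*ω*t = a*ω*t + b*ω*t by ring,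
      Real.cos_sub, Real.cos_add]
    ring
  have e2 : ∀ t : ℝ, Real.sin (a*ω*t) * Real.sin (b*ω*t)
      = (Real.cos ((((a:ℤ) - b : ℤ) : ℝ)*ω*t) - Real.cos ((((a:ℤ) + b : ℤ) : ℝ)*ω*t))/2 := by
    intro t
    push_cast
    rw [show ((a:ℝ) - b)*ω*t = a*ω*t - b*ω*t by ring, show ((a:ℝ) + b)*ω*t = a*ω*t + b*ω*t by ring,
      Real.cos_sub, Real.cos_add]
    ring
  have e3 : ∀ t : ℝ, Real.sin (a*ω*t) * Real.cos (b*ω*t)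
      = (Real.sin ((((a:ℤ) - b : ℤ) : ℝ)*ω*t) + Real.sin ((((a:ℤ) + b : ℤ) : ℝ)*ω*t))/2 := by
    intro t
    push_cast
    rw [show ((a:ℝ) - b)*ω*t = a*ω*t - b*ω*t by ring, show ((a:ℝ) + b)*ω*t = a*ω*t + b*ω*t by ring,
      Real.sin_sub, Real.sin_add]
    ring
  have e4 : ∀ t : ℝ, Real.cos (a*ω*t) * Real.sin (b*ω*t)
      = (Real.sin ((((b:ℤ) - a : ℤ) : ℝ)*ω*t) + Real.sin ((((b:ℤ) + a : ℤ) : ℝ)*ω*t))/2 := by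
    intro t
    rw [mul_comm]
    push_cast
    rw [show ((b:ℝ) - a)*ω*t = b*ω*t - a*ω*t by ring, show ((b:ℝ) + a)*ω*t = b*ω*t + a*ω*t by ring,
      Real.sin_sub, Real.sin_add]
    ring
  have hrw : (fun t => (A * Real.cos (a*ω*t) + B * Real.sin (a*ω*t)) *
      (C * Real.cos (b*ω*t) + D * Real.sin (b*ω*t)))
      = fun t => (A*C) * ((Real.cos ((((a:ℤ) - b : ℤ) : ℝ)*ω*t) + Real.cos ((((a:ℤ) + b : ℤ) : ℝ)*ω*t))/2)
        + ((A*D) * ((Real.sin ((((b:ℤ) - a : ℤ) : ℝ)*ω*t) + Real.sin ((((b:ℤ) + a : ℤ) : ℝ)*ω*t))/2)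
        + ((B*C) * ((Real.sin ((((a:ℤ) - b : ℤ) : ℝ)*ω*t) + Real.sin ((((a:ℤ) + b : ℤ) : ℝ)*ω*t))/2)
        + (B*D) * ((Real.cos ((((a:ℤ) - b : ℤ) : ℝ)*ω*t) - Real.cos ((((a:ℤ) + b : ℤ) : ℝ)*ω*t))/2))) := by
    funext t
    rw [← e1 t, ← e2 t, ← e3 t, ← e4 t]
    ring
  have ic : ∀ k : ℤ, Continuous (fun t : ℝ => Real.cos ((k:ℝ)*ω*t)) := by intro k; fun_prop
  have is' : ∀ k : ℤ, Continuous (fun t : ℝ => Real.sin ((k:ℝ)*ω*t)) := by intro k; fun_prop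
  unfold ip
  rw [hrw]
  rw [intervalIntegral.integral_add, intervalIntegral.integral_add, intervalIntegral.integral_add]
  · rw [intervalIntegral.integral_const_mul, intervalIntegral.integral_const_mul, intervalIntegral.integral_const_mul, intervalIntegral.integral_const_mul,
      intervalIntegral.integral_div, intervalIntegral.integral_div, intervalIntegral.integral_div,
      intervalIntegral.integral_div]
    rw [intervalIntegral.integral_add ((ic _).intervalIntegrable _ _) ((ic _).intervalIntegrable _ _),
      intervalIntegral.integral_sub ((ic _).intervalIntegrable _ _) ((ic _).intervalIntegrable _ _),
      intervalIntegral.integral_add ((is' _).intervalIntegrable _ _) ((is' _).intervalIntegrable _ _),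
      intervalIntegral.integral_add ((is' _).intervalIntegrable _ _) ((is' _).intervalIntegrable _ _)]
    rw [Icos_aux T hT, Icos_aux T hT, Isin_aux T hT, Isin_aux T hT, Isin_aux T hT, Isin_aux T hT]
    have hab : (a:ℤ) + b ≠ 0 := by positivity
    have hab' : ((a:ℤ) - b = 0) ↔ a = b := by omega
    simp only [hab, if_false, hab']
    split_ifs with h
    · field_simp; ring
    · simp
  all_goals
    apply Continuous.intervalIntegrable
    fun_prop

lemma ip_sum_left (T : ℝ) (N : Finset ℕ) (g : ℕ → ℝ → ℝ) (f : ℝ → ℝ)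
    (h : ∀ n ∈ N, IntervalIntegrable (fun t => g n t * f t) volume 0 T) :
    ip T (fun t => ∑ n ∈ N, g n t) f = ∑ n ∈ N, ip T (g n) f := by
  unfold ip
  rw [show (fun t => (∑ n ∈ N, g n t) * f t) = fun t => ∑ n ∈ N, g n t * f t from
    funext fun t => Finset.sum_mul .., intervalIntegral.integral_finset_sum h, Finset.mul_sum]

lemma ip_sum_right (T : ℝ) (f : ℝ → ℝ) (N : Finset ℕ) (g : ℕ → ℝ → ℝ)
    (h : ∀ n ∈ N, IntervalIntegrable (fun t => f t * g n t) volume 0 T) :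
    ip T f (fun t => ∑ n ∈ N, g n t) = ∑ n ∈ N, ip T f (g n) := by
  unfold ip
  rw [show (fun t => f t * (∑ n ∈ N, g n t)) = fun t => ∑ n ∈ N, f t * g n t from
    funext fun t => Finset.mul_sum .., intervalIntegral.integral_finset_sum h, Finset.mul_sum]

lemma ip_const_mul_left (T : ℝ) (c : ℝ) (f g : ℝ → ℝ) :
    ip T (fun t => c * f t) g = c * ip T f g := by
  unfold ip
  rw [show (fun t => (c * f t) * g t) = fun t => c * (f t * g t) from funext fun t => by ring,
    intervalIntegral.integral_const_mul]
  ring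

lemma ip_const_mul_right (T : ℝ) (c : ℝ) (f g : ℝ → ℝ) :
    ip T f (fun t => c * g t) = c * ip T f g := by
  unfold ip
  rw [show (fun t => f t * (c * g t)) = fun t => c * (f t * g t) from funext fun t => by ring,
    intervalIntegral.integral_const_mul]
  ring

theorem cpc_pairwise_orthogonal (T : ℝ) (hT : 0 < T) (ω : ℝ) (hω : ω = 2 * Real.pi / T)
    (N : Finset ℕ) (hN : ∀ n ∈ N, 0 < n)
    (Uc Us : ℕ → ℝ) (un dun : ℕ → ℝ → ℝ) (u i : ℝ → ℝ)
    (hun : ∀ n ∈ N, ∀ t, un n t =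
      Real.sqrt 2 * Uc n * Real.cos (n * ω * t) + Real.sqrt 2 * Us n * Real.sin (n * ω * t))
    (hdun : ∀ n ∈ N, ∀ t, HasDerivAt (un n) (dun n t) t)
    (hu : ∀ t, u t = ∑ n ∈ N, un n t)
    (hi : MemLp i 2 (volume.restrict (Set.Ioc 0 T)))
    (hu0 : ip T u u ≠ 0) (hun0 : ∀ n ∈ N, ip T (un n) (un n) ≠ 0)
    (Ge : ℝ) (hGe : Ge = ip T u i / ip T u u)
    (G : ℕ → ℝ) (hG : ∀ n ∈ N, G n = ip T (un n) i / ip T (un n) (un n))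
    (ia is ir : ℝ → ℝ)
    (hia : ∀ t, ia t = Ge * u t)
    (his : ∀ t, is t = ∑ n ∈ N, (G n - Ge) * un n t)
    (hir : ∀ t, ir t = ∑ n ∈ N, (ip T (dun n) i / ip T (dun n) (dun n)) * dun n t) :
    ip T ia is = 0 ∧ ip T ia ir = 0 ∧ ip T is ir = 0 := by
  -- explicit forms
  have hun' : ∀ n ∈ N, un n = fun t =>
      Real.sqrt 2 * Uc n * Real.cos (n * ω * t) + Real.sqrt 2 * Us n * Real.sin (n * ω * t) :=
    fun n hn => funext (hun n hn)
  have hdun' : ∀ n ∈ N, dun n = fun t =>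
      (Real.sqrt 2 * Us n * (n * ω)) * Real.cos (n * ω * t) +
      (-(Real.sqrt 2 * Uc n * (n * ω))) * Real.sin (n * ω * t) := by
    intro n hn
    funext t
    have hlin : HasDerivAt (fun t : ℝ => (n:ℝ) * ω * t) ((n:ℝ)*ω) t := by
      simpa using (hasDerivAt_id t).const_mul ((n:ℝ)*ω)
    have h2 : HasDerivAt (un n)
        ((Real.sqrt 2 * Us n * (n * ω)) * Real.cos (n * ω * t) +
         (-(Real.sqrt 2 * Uc n * (n * ω))) * Real.sin (n * ω * t)) t := by
      rw [hun' n hn]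
      have := (hlin.cos.const_mul (Real.sqrt 2 * Uc n)).add
        (hlin.sin.const_mul (Real.sqrt 2 * Us n))
      exact this.congr_deriv (by ring)
    exact (hdun n hn t).unique h2
  have hcont_un : ∀ n ∈ N, Continuous (un n) := by
    intro n hn; rw [hun' n hn]; fun_prop
  have hcont_dun : ∀ n ∈ N, Continuous (dun n) := by
    intro n hn; rw [hdun' n hn]; fun_prop
  have huf : u = fun t => ∑ n ∈ N, un n t := funext hu
  have hcu : Continuous u := by
    rw [huf]; exact continuous_finset_sum _ (fun n hn => hcont_un n hn)
  -- key inner products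
  have P : ∀ n ∈ N, ∀ m ∈ N, ip T (un n) (un m) =
      if n = m then (Uc n)^2 + (Us n)^2 else 0 := by
    intro n hn m hm
    rw [hun' n hn, hun' m hm, ip_trig T hT ω hω n m (hN n hn) (hN m hm)]
    split_ifs with h
    · subst h
      have h2 : Real.sqrt 2 * Real.sqrt 2 = 2 := Real.mul_self_sqrt (by norm_num)
      linear_combination (((Uc n)^2 + (Us n)^2)/2) * h2
    · rfl
  have Q : ∀ n ∈ N, ∀ m ∈ N, ip T (un n) (dun m) = 0 := by
    intro n hn m hm
    rw [hun' n hn, hdun' m hm, ip_trig T hT ω hω n m (hN n hn) (hN m hm)]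
    split_ifs with h
    · subst h; ring
    · rfl
  -- integrability with i
  haveI : IsFiniteMeasure (volume.restrict (Set.Ioc (0:ℝ) T)) := by
    constructor
    rw [Measure.restrict_apply_univ]
    simp [Real.volume_Ioc]
  have hii : Integrable i (volume.restrict (Set.Ioc 0 T)) := hi.integrable (by norm_num)
  have hfi : ∀ f : ℝ → ℝ, Continuous f → (∃ C, ∀ x, ‖f x‖ ≤ C) →
      IntervalIntegrable (fun t => f t * i t) volume 0 T := by
    intro f hf hbd
    rw [intervalIntegrable_iff, Set.uIoc_of_le hT.le]
    exact hii.bdd_mul hf.aestronglyMeasurable (ae_of_all _ hbd.choose_spec)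
  have hbd_un : ∀ n ∈ N, ∃ C, ∀ x, ‖un n x‖ ≤ C := by
    intro n hn
    refine ⟨Real.sqrt 2 * |Uc n| + Real.sqrt 2 * |Us n|, fun x => ?_⟩
    rw [hun n hn x]
    simp only [Real.norm_eq_abs]
    have h1 : |Real.sqrt 2 * Uc n * Real.cos (n*ω*x)| ≤ Real.sqrt 2 * |Uc n| := by
      rw [abs_mul, abs_mul, abs_of_nonneg (Real.sqrt_nonneg 2)]
      exact mul_le_of_le_one_right (by positivity) (Real.abs_cos_le_one ((n:ℝ)*ω*x))
    have h2 : |Real.sqrt 2 * Us n * Real.sin (n*ω*x)| ≤ Real.sqrt 2 * |Us n| := by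
      rw [abs_mul, abs_mul, abs_of_nonneg (Real.sqrt_nonneg 2)]
      exact mul_le_of_le_one_right (by positivity) (Real.abs_sin_le_one ((n:ℝ)*ω*x))
    exact (abs_add_le _ _).trans (by linarith)
  have hsum_ui : ip T u i = ∑ n ∈ N, ip T (un n) i := by
    rw [huf]
    exact ip_sum_left T N un i (fun n hn => hfi (un n) (hcont_un n hn) (hbd_un n hn))
  -- ip T u (un m) and ip T u (dun m)
  have hu_un : ∀ m ∈ N, ip T u (un m) = (Uc m)^2 + (Us m)^2 := by
    intro m hm
    rw [huf, ip_sum_left T N un (un m)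
      (fun n hn => ((hcont_un n hn).mul (hcont_un m hm)).intervalIntegrable _ _)]
    rw [Finset.sum_congr rfl (fun n hn => P n hn m hm)]
    simp [Finset.sum_ite_eq, hm]
  have hu_dun : ∀ m ∈ N, ip T u (dun m) = 0 := by
    intro m hm
    rw [huf, ip_sum_left T N un (dun m)
      (fun n hn => ((hcont_un n hn).mul (hcont_dun m hm)).intervalIntegrable _ _)]
    exact Finset.sum_eq_zero (fun n hn => Q n hn m hm)
  have huu : ip T u u = ∑ n ∈ N, ((Uc n)^2 + (Us n)^2) := by
    conv_lhs => rw [show ip T u u = ip T u (fun t => ∑ n ∈ N, un n t) by rw [← huf]]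
    rw [ip_sum_right T u N un
      (fun n hn => (hcu.mul (hcont_un n hn)).intervalIntegrable _ _)]
    exact Finset.sum_congr rfl (fun n hn => hu_un n hn)
  -- the common sum
  have hsum0 : ∑ n ∈ N, (G n - Ge) * ((Uc n)^2 + (Us n)^2) = 0 := by
    have h1 : ∀ n ∈ N, (G n - Ge) * ((Uc n)^2 + (Us n)^2)
        = ip T (un n) i - Ge * ((Uc n)^2 + (Us n)^2) := by
      intro n hn
      have hp : ip T (un n) (un n) = (Uc n)^2 + (Us n)^2 := by simpa using P n hn n hn
      have hne := hun0 n hn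
      rw [hp] at hne
      rw [hG n hn, hp, sub_mul, div_mul_cancel₀ _ hne]
    rw [Finset.sum_congr rfl h1, Finset.sum_sub_distrib, ← hsum_ui, ← Finset.mul_sum, ← huu,
      hGe, div_mul_cancel₀ _ hu0, sub_self]
  have hiaf : ia = fun t => Ge * u t := funext hia
  have hisf : is = fun t => ∑ n ∈ N, (G n - Ge) * un n t := funext his
  have hirf : ir = fun t => ∑ n ∈ N, (ip T (dun n) i / ip T (dun n) (dun n)) * dun n t :=
    funext hir
  have hcont_is : Continuous is := by
    rw [hisf]
    exact continuous_finset_sum _ (fun n hn => (continuous_const.mul (hcont_un n hn)))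
  have hcont_ir : Continuous ir := by
    rw [hirf]
    exact continuous_finset_sum _ (fun n hn => (continuous_const.mul (hcont_dun n hn)))
  refine ⟨?_, ?_, ?_⟩
  · -- ia ⊥ is
    rw [hiaf, ip_const_mul_left]
    rw [show ip T u is = ip T u (fun t => ∑ n ∈ N, (fun m t => (G m - Ge) * un m t) n t) by
      rw [← hisf]]
    rw [ip_sum_right T u N (fun m t => (G m - Ge) * un m t)
      (fun n hn => (hcu.mul (continuous_const.mul (hcont_un n hn))).intervalIntegrable _ _)]
    have : ∀ n ∈ N, ip T u (fun t => (G n - Ge) * un n t)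
        = (G n - Ge) * ((Uc n)^2 + (Us n)^2) := by
      intro n hn
      rw [ip_const_mul_right, hu_un n hn]
    rw [Finset.sum_congr rfl this, hsum0, mul_zero]
  · -- ia ⊥ ir
    rw [hiaf, ip_const_mul_left]
    rw [show ip T u ir = ip T u (fun t => ∑ n ∈ N,
        (fun m t => (ip T (dun m) i / ip T (dun m) (dun m)) * dun m t) n t) by rw [← hirf]]
    rw [ip_sum_right T u N (fun m t => (ip T (dun m) i / ip T (dun m) (dun m)) * dun m t)
      (fun n hn => (hcu.mul (continuous_const.mul (hcont_dun n hn))).intervalIntegrable _ _)]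
    have : ∀ n ∈ N, ip T u (fun t => (ip T (dun n) i / ip T (dun n) (dun n)) * dun n t) = 0 := by
      intro n hn
      rw [ip_const_mul_right, hu_dun n hn, mul_zero]
    rw [Finset.sum_congr rfl this, Finset.sum_const_zero, mul_zero]
  · -- is ⊥ ir
    rw [show ip T is ir = ip T (fun t => ∑ n ∈ N, (fun m t => (G m - Ge) * un m t) n t) ir by
      rw [← hisf]]
    rw [ip_sum_left T N (fun m t => (G m - Ge) * un m t) ir
      (fun n hn => ((continuous_const.mul (hcont_un n hn)).mul hcont_ir).intervalIntegrable _ _)]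
    have hn0 : ∀ n ∈ N, ip T (fun t => (G n - Ge) * un n t) ir = 0 := by
      intro n hn
      rw [ip_const_mul_left]
      rw [show ip T (un n) ir = ip T (un n) (fun t => ∑ m ∈ N,
          (fun m t => (ip T (dun m) i / ip T (dun m) (dun m)) * dun m t) m t) by rw [← hirf]]
      rw [ip_sum_right T (un n) N (fun m t => (ip T (dun m) i / ip T (dun m) (dun m)) * dun m t)
        (fun m hm => ((hcont_un n hn).mul
          (continuous_const.mul (hcont_dun m hm))).intervalIntegrable _ _)]
      have : ∀ m ∈ N, ip T (un n) (fun t =>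
          (ip T (dun m) i / ip T (dun m) (dun m)) * dun m t) = 0 := by
        intro m hm
        rw [ip_const_mul_right, Q n hn m hm, mul_zero]
      rw [Finset.sum_congr rfl this, Finset.sum_const_zero, mul_zero]
    rw [Finset.sum_congr rfl hn0, Finset.sum_const_zero]
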